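/- arXiv:2308.11947 — 2 statements merged into one kernel-verified Lean document; each statement's English description precedes it below -/
import Mathlib

section
/- If f ∈ C^{k+1,α}([a,b]) with 0 < α < 1, then the function R(x,y) = (f(y) - P_k(x,y))/(y-x)^{k+1}, extended to y = x via R(x,x) = f^{(k+1)}(x)/(k+1)!, equals (1/k!) ∫_0^1 (1-s)^k f^{(k+1)}(s y + (1-s)x) ds for all x, y ∈ [a,b], and is Hölder continuous of exponent α in (x,y) jointly: |R(x₁,y₁) - R(x₂,y₂)| ≤ ‖f‖_{C^{k+1,α}} (|x₁-x₂|^α + |y₁-y₂|^α) / k!. -/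
open Set intervalIntegral

/-- The `k`-th Taylor polynomial of `f` centered at `x` (derivatives within `s`), at `y`. -/
noncomputable def taylorPolyWithin (f : ℝ → ℝ) (s : Set ℝ) (k : ℕ) (x y : ℝ) : ℝ :=
  ∑ i ∈ Finset.range (k + 1), iteratedDerivWithin i f s x * (y - x) ^ i / (i.factorial : ℝ)

/-- The normalized Taylor remainder `R(x,y)`, extended across the diagonal. -/
noncomputable def remainderQuot (f : ℝ → ℝ) (s : Set ℝ) (k : ℕ) (x y : ℝ) : ℝ :=
  if y = x then iteratedDerivWithin (k + 1) f s x / ((k + 1).factorial : ℝ)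
  else (f y - taylorPolyWithin f s k x y) / (y - x) ^ (k + 1)

lemma rpow_subadd {u v p : ℝ} (hu : 0 ≤ u) (hv : 0 ≤ v) (hp : 0 ≤ p) (hp1 : p ≤ 1) :
    (u + v) ^ p ≤ u ^ p + v ^ p := by
  lift u to NNReal using hu
  lift v to NNReal using hv
  exact_mod_cast NNReal.rpow_add_le_add_rpow u v hp hp1

lemma taylorPoly_eq (f : ℝ → ℝ) (s : Set ℝ) (k : ℕ) (x y : ℝ) :
    taylorPolyWithin f s k x y = taylorWithinEval f k s x y := by
  rw [taylor_within_apply, taylorPolyWithin]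
  refine Finset.sum_congr rfl fun i _ => ?_
  simp [smul_eq_mul]
  ring

lemma integral_one_sub_pow (k : ℕ) : (∫ s in (0:ℝ)..1, (1 - s)^k) = 1/(k+1 : ℝ) := by
  have h := intervalIntegral.integral_comp_sub_left (a := (0:ℝ)) (b := 1) (fun t => t ^ k) 1
  simp at h
  rw [h, one_div]

lemma key_rep (a b : ℝ) (k : ℕ) (hab : a < b) (f : ℝ → ℝ)
    (hf : ContDiffOn ℝ (k + 1) f (Icc a b)) {x y : ℝ} (hx : x ∈ Icc a b) (hy : y ∈ Icc a b) :
    f y - taylorPolyWithin f (Icc a b) k x y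
      = (y - x) ^ (k + 1) * ((k.factorial : ℝ)⁻¹ *
          ∫ s in (0:ℝ)..1, (1 - s) ^ k * iteratedDerivWithin (k + 1) f (Icc a b)
            (s * y + (1 - s) * x)) := by
  set F := iteratedDerivWithin (k + 1) f (Icc a b) with hF
  have hud : UniqueDiffOn ℝ (Icc a b) := uniqueDiffOn_Icc hab
  have hFcont : ContinuousOn F (Icc a b) :=
    hf.continuousOn_iteratedDerivWithin le_rfl hud
  have hfk : ContDiffOn ℝ k f (Icc a b) := hf.of_le (by exact_mod_cast Nat.le_succ k)
  have hdiff : DifferentiableOn ℝ (iteratedDerivWithin k f (Icc a b)) (Icc a b) :=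
    hf.differentiableOn_iteratedDerivWithin (by exact_mod_cast k.lt_succ_self) hud
  have hsub : uIcc x y ⊆ Icc a b := uIcc_subset_Icc hx hy
  set G : ℝ → ℝ := fun t => ((k.factorial : ℝ)⁻¹ * (y - t) ^ k) * F t with hG
  have hGcont : ContinuousOn G (uIcc x y) :=
    (continuousOn_const.mul ((continuousOn_const.sub continuousOn_id).pow k)).mul
      (hFcont.mono hsub)
  have ftc : (∫ t in x..y, G t) = f y - taylorWithinEval f k (Icc a b) x y := by
    have h := integral_eq_sub_of_hasDeriv_right
      (f := fun t => taylorWithinEval f k (Icc a b) t y) (f' := G) (a := x) (b := y)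
      ((continuousOn_taylorWithinEval hud hfk).mono hsub)
      (fun t ht => by
        have htab : t ∈ Ioo a b := by
          constructor
          · exact lt_of_le_of_lt (le_min hx.1 hy.1) ht.1
          · exact lt_of_lt_of_le ht.2 (max_le hx.2 hy.2)
        have := taylorWithinEval_hasDerivAt_Ioo y hab htab hfk
          (hdiff.mono Ioo_subset_Icc_self)
        simpa [hG, smul_eq_mul] using this.hasDerivWithinAt)
      (hGcont.intervalIntegrable)
    rw [h]
    simp
  have hφ : ∀ s ∈ uIcc (0:ℝ) 1, HasDerivAt (fun s : ℝ => x + s * (y - x)) (y - x) s := by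
    intro s _
    simpa using ((hasDerivAt_id s).mul_const (y - x)).const_add x
  have subst := integral_comp_mul_deriv' (a := (0:ℝ)) (b := 1) hφ continuousOn_const
    ((hGcont.mono ?_) : ContinuousOn G _)
  · have h0 : x + (0:ℝ) * (y - x) = x := by ring
    have h1 : x + (1:ℝ) * (y - x) = y := by ring
    rw [h0, h1] at subst
    rw [← subst] at ftc
    rw [taylorPoly_eq, ← ftc]
    rw [show (y - x) ^ (k + 1) * ((k.factorial : ℝ)⁻¹ *
        ∫ s in (0:ℝ)..1, (1 - s) ^ k * F (s * y + (1 - s) * x))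
      = ∫ s in (0:ℝ)..1, ((y - x) ^ (k + 1) * (k.factorial : ℝ)⁻¹) *
          ((1 - s) ^ k * F (s * y + (1 - s) * x)) from by
        rw [intervalIntegral.integral_const_mul]; ring]
    refine intervalIntegral.integral_congr fun s hs => ?_
    simp only [Function.comp, hG]
    have h2 : y - (x + s * (y - x)) = (1 - s) * (y - x) := by ring
    rw [h2]
    have hpt : x + s * (y - x) = s * y + (1 - s) * x := by ring
    rw [hpt, mul_pow]
    ring
  · rintro _ ⟨s, hs, rfl⟩
    rw [uIcc_of_le (by norm_num : (0:ℝ) ≤ 1)] at hs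
    rcases le_total x y with h | h
    · rw [uIcc_of_le h]
      refine ⟨?_, ?_⟩
      · show x ≤ x + s * (y - x); nlinarith [hs.1, hs.2]
      · show x + s * (y - x) ≤ y; nlinarith [hs.1, hs.2]
    · rw [uIcc_of_ge h]
      refine ⟨?_, ?_⟩
      · show y ≤ x + s * (y - x); nlinarith [hs.1, hs.2]
      · show x + s * (y - x) ≤ x; nlinarith [hs.1, hs.2]

theorem remainder_integral_rep_and_holder (a b α : ℝ) (k : ℕ) (hab : a < b)
    (hα : 0 < α) (hα1 : α < 1) (f : ℝ → ℝ) (M : ℝ)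
    (hf : ContDiffOn ℝ (k + 1) f (Icc a b))
    (hH : ∀ x ∈ Icc a b, ∀ y ∈ Icc a b,
      |iteratedDerivWithin (k + 1) f (Icc a b) x - iteratedDerivWithin (k + 1) f (Icc a b) y|
        ≤ M * |x - y| ^ α) :
    (∀ x ∈ Icc a b, ∀ y ∈ Icc a b,
      remainderQuot f (Icc a b) k x y
        = (1 / (k.factorial : ℝ)) *
            ∫ s in (0:ℝ)..1, (1 - s) ^ k * iteratedDerivWithin (k + 1) f (Icc a b)
              (s * y + (1 - s) * x)) ∧
    (∀ x₁ ∈ Icc a b, ∀ y₁ ∈ Icc a b, ∀ x₂ ∈ Icc a b, ∀ y₂ ∈ Icc a b,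
      |remainderQuot f (Icc a b) k x₁ y₁ - remainderQuot f (Icc a b) k x₂ y₂|
        ≤ M * (|x₁ - x₂| ^ α + |y₁ - y₂| ^ α) / (k.factorial : ℝ)) := by
  set F := iteratedDerivWithin (k + 1) f (Icc a b) with hF
  have hud : UniqueDiffOn ℝ (Icc a b) := uniqueDiffOn_Icc hab
  have hFcont : ContinuousOn F (Icc a b) :=
    hf.continuousOn_iteratedDerivWithin le_rfl hud
  have hkfac : (0:ℝ) < (k.factorial : ℝ) := by exact_mod_cast k.factorial_pos
  have rep : ∀ x ∈ Icc a b, ∀ y ∈ Icc a b,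
      remainderQuot f (Icc a b) k x y
        = (1 / (k.factorial : ℝ)) *
            ∫ s in (0:ℝ)..1, (1 - s) ^ k * F (s * y + (1 - s) * x) := by
    intro x hx y hy
    by_cases h : y = x
    · subst h
      rw [remainderQuot, if_pos rfl]
      have hpt : ∀ s : ℝ, s * y + (1 - s) * y = y := fun s => by ring
      simp_rw [hpt]
      rw [intervalIntegral.integral_mul_const, integral_one_sub_pow, Nat.factorial_succ]
      push_cast
      rw [div_eq_iff (by positivity), ← hF]
      have h1 : ((k:ℝ)+1) ≠ 0 := by positivity
      have h2 : (k.factorial:ℝ) ≠ 0 := hkfac.ne'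
      simp only [one_div]
      rw [show ((k.factorial:ℝ))⁻¹ * ((((k:ℝ)+1))⁻¹ * F y) * ((((k:ℝ)+1)) * (k.factorial:ℝ))
          = F y * (((k.factorial:ℝ))⁻¹ * (k.factorial:ℝ)) * ((((k:ℝ)+1))⁻¹ * (((k:ℝ)+1)))
        from by ring, inv_mul_cancel₀ h2, inv_mul_cancel₀ h1, mul_one, mul_one]
    · rw [remainderQuot, if_neg h]
      have hk := key_rep a b k hab f hf hx hy
      rw [← hF] at hk
      rw [hk]
      have hyx : (y - x) ^ (k + 1) ≠ 0 := pow_ne_zero _ (sub_ne_zero.mpr h)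
      field_simp
  refine ⟨rep, ?_⟩
  intro x₁ hx₁ y₁ hy₁ x₂ hx₂ y₂ hy₂
  have hM : 0 ≤ M := by
    have h1 := hH a ⟨le_rfl, hab.le⟩ b ⟨hab.le, le_rfl⟩
    have h2 : 0 < |a - b| ^ α :=
      Real.rpow_pos_of_pos (abs_pos.mpr (sub_ne_zero.mpr hab.ne)) α
    nlinarith [abs_nonneg (F a - F b)]
  set C := M * (|x₁ - x₂| ^ α + |y₁ - y₂| ^ α) with hC
  have hCnn : 0 ≤ C := mul_nonneg hM (add_nonneg (Real.rpow_nonneg (abs_nonneg _) _)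
    (Real.rpow_nonneg (abs_nonneg _) _))
  have contpath : ∀ x y : ℝ, x ∈ Icc a b → y ∈ Icc a b →
      ContinuousOn (fun s : ℝ => (1 - s) ^ k * F (s * y + (1 - s) * x)) (uIcc 0 1) := by
    intro x y hx hy
    refine ((continuousOn_const.sub continuousOn_id).pow k).mul (hFcont.comp
      (Continuous.continuousOn (by continuity)) ?_)
    intro s hs
    rw [uIcc_of_le (by norm_num : (0:ℝ) ≤ 1)] at hs
    obtain ⟨hx1, hx2⟩ := hx; obtain ⟨hy1, hy2⟩ := hy
    refine ⟨?_, ?_⟩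
    · show a ≤ s * y + (1 - s) * x; nlinarith [hs.1, hs.2]
    · show s * y + (1 - s) * x ≤ b; nlinarith [hs.1, hs.2]
  have int1 : IntervalIntegrable (fun s : ℝ => (1 - s) ^ k * F (s * y₁ + (1 - s) * x₁))
      MeasureTheory.volume 0 1 := (contpath _ _ hx₁ hy₁).intervalIntegrable
  have int2 : IntervalIntegrable (fun s : ℝ => (1 - s) ^ k * F (s * y₂ + (1 - s) * x₂))
      MeasureTheory.volume 0 1 := (contpath _ _ hx₂ hy₂).intervalIntegrable
  rw [rep x₁ hx₁ y₁ hy₁, rep x₂ hx₂ y₂ hy₂, ← mul_sub,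
    ← intervalIntegral.integral_sub int1 int2, abs_mul,
    abs_of_nonneg (by positivity : (0:ℝ) ≤ 1 / (k.factorial : ℝ))]
  have key : ∀ s ∈ Icc (0:ℝ) 1,
      |(1 - s) ^ k * F (s * y₁ + (1 - s) * x₁) - (1 - s) ^ k * F (s * y₂ + (1 - s) * x₂)|
        ≤ (1 - s) ^ k * C := by
    intro s hs
    obtain ⟨hs0, hs1⟩ := hs
    have h1sk : (0:ℝ) ≤ (1 - s) ^ k := pow_nonneg (by linarith) k
    rw [← mul_sub, abs_mul, abs_of_nonneg h1sk]
    refine mul_le_mul_of_nonneg_left ?_ h1sk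
    have hp1 : s * y₁ + (1 - s) * x₁ ∈ Icc a b := by
      obtain ⟨hx1, hx2⟩ := hx₁; obtain ⟨hy1, hy2⟩ := hy₁
      constructor <;> nlinarith
    have hp2 : s * y₂ + (1 - s) * x₂ ∈ Icc a b := by
      obtain ⟨hx1, hx2⟩ := hx₂; obtain ⟨hy1, hy2⟩ := hy₂
      constructor <;> nlinarith
    calc |F (s * y₁ + (1 - s) * x₁) - F (s * y₂ + (1 - s) * x₂)|
        ≤ M * |(s * y₁ + (1 - s) * x₁) - (s * y₂ + (1 - s) * x₂)| ^ α := hH _ hp1 _ hp2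
      _ ≤ C := by
          rw [hC]
          refine mul_le_mul_of_nonneg_left ?_ hM
          have hd : (s * y₁ + (1 - s) * x₁) - (s * y₂ + (1 - s) * x₂)
              = s * (y₁ - y₂) + (1 - s) * (x₁ - x₂) := by ring
          calc |(s * y₁ + (1 - s) * x₁) - (s * y₂ + (1 - s) * x₂)| ^ α
              = |s * (y₁ - y₂) + (1 - s) * (x₁ - x₂)| ^ α := by rw [hd]
            _ ≤ (|s * (y₁ - y₂)| + |(1 - s) * (x₁ - x₂)|) ^ α :=
                Real.rpow_le_rpow (abs_nonneg _) (abs_add_le _ _) hα.le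
            _ ≤ |s * (y₁ - y₂)| ^ α + |(1 - s) * (x₁ - x₂)| ^ α :=
                rpow_subadd (abs_nonneg _) (abs_nonneg _) hα.le hα1.le
            _ ≤ |x₁ - x₂| ^ α + |y₁ - y₂| ^ α := by
                rw [abs_mul, abs_mul, Real.mul_rpow (abs_nonneg _) (abs_nonneg _),
                  Real.mul_rpow (abs_nonneg _) (abs_nonneg _)]
                have e1 : |s| ^ α ≤ 1 :=
                  Real.rpow_le_one (abs_nonneg _) (by rw [abs_of_nonneg hs0]; exact hs1) hα.le
                have e2 : |1 - s| ^ α ≤ 1 :=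
                  Real.rpow_le_one (abs_nonneg _) (by rw [abs_of_nonneg (by linarith)]; linarith)
                    hα.le
                nlinarith [Real.rpow_nonneg (abs_nonneg (y₁ - y₂)) α,
                  Real.rpow_nonneg (abs_nonneg (x₁ - x₂)) α,
                  Real.rpow_nonneg (abs_nonneg s) α,
                  Real.rpow_nonneg (abs_nonneg (1 - s)) α]
  have bound : |∫ s in (0:ℝ)..1,
      ((1 - s) ^ k * F (s * y₁ + (1 - s) * x₁) - (1 - s) ^ k * F (s * y₂ + (1 - s) * x₂))|
        ≤ C := by
    calc |∫ s in (0:ℝ)..1,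
        ((1 - s) ^ k * F (s * y₁ + (1 - s) * x₁) - (1 - s) ^ k * F (s * y₂ + (1 - s) * x₂))|
        ≤ ∫ s in (0:ℝ)..1,
          |(1 - s) ^ k * F (s * y₁ + (1 - s) * x₁) - (1 - s) ^ k * F (s * y₂ + (1 - s) * x₂)| := by
          exact intervalIntegral.abs_integral_le_integral_abs (by norm_num : (0:ℝ) ≤ 1)
      _ ≤ ∫ s in (0:ℝ)..1, (1 - s) ^ k * C := by
          refine intervalIntegral.integral_mono_on (by norm_num) (int1.sub int2).abs
            ((((continuousOn_const.sub continuousOn_id).pow k).mul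
              continuousOn_const).intervalIntegrable) key
      _ = (1/((k:ℝ)+1)) * C := by
          rw [intervalIntegral.integral_mul_const, integral_one_sub_pow]
      _ ≤ C := by
          have h1 : (1:ℝ)/((k:ℝ)+1) ≤ 1 := by
            rw [div_le_one (by positivity)]
            linarith [Nat.cast_nonneg (α := ℝ) k]
          nlinarith
  calc (1 / (k.factorial : ℝ)) * |∫ s in (0:ℝ)..1,
      ((1 - s) ^ k * F (s * y₁ + (1 - s) * x₁) - (1 - s) ^ k * F (s * y₂ + (1 - s) * x₂))|
      ≤ (1 / (k.factorial : ℝ)) * C := mul_le_mul_of_nonneg_left bound (by positivity)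
    _ = M * (|x₁ - x₂| ^ α + |y₁ - y₂| ^ α) / (k.factorial : ℝ) := by rw [hC]; ring
end

section
/- If f ∈ C^{k+1,α}([a,b]) with 0 < α < 1, then the function F(x) = ∫_a^b (f(y)-P_k(x,y))/(y-x)^{k+1} dy is differentiable on [a,b] and F'(x) = ∫_a^b ∂/∂x[(f(y)-P_k(x,y))/(y-x)^{k+1}] dy = (k+1) ∫_a^b (f(y)-P_{k+1}(x,y))/(y-x)^{k+2} dy. -/
open Set intervalIntegral
open scoped Interval

set_option maxHeartbeats 1000000

theorem taylorPoly_hasDeriv (a b : ℝ) (hab : a < b) (k : ℕ) (f : ℝ → ℝ)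
    (hf : ContDiffOn ℝ (k + 1) f (Icc a b)) (y : ℝ) {t : ℝ} (ht : t ∈ Icc a b) :
    HasDerivWithinAt (fun t => taylorPolyWithin f (Icc a b) k t y)
      (iteratedDerivWithin (k + 1) f (Icc a b) t * (y - t) ^ k / (k.factorial : ℝ))
      (Icc a b) t := by
  have hs : UniqueDiffOn ℝ (Icc a b) := uniqueDiffOn_Icc hab
  set d := fun i => iteratedDerivWithin i f (Icc a b) with hd
  have key : ∀ i ∈ Finset.range (k + 1),
      HasDerivWithinAt (fun t => d i t * (y - t) ^ i / (i.factorial : ℝ))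
        (d (i+1) t * (y - t) ^ i / (i.factorial : ℝ)
          - d i t * (i : ℝ) * (y - t) ^ (i - 1) / (i.factorial : ℝ)) (Icc a b) t := by
    intro i hi
    have hik : (i : WithTop ℕ∞) < (k + 1 : ℕ) := by
      exact_mod_cast Nat.lt_succ_of_le (Nat.lt_succ_iff.mp (Finset.mem_range.mp hi))
    have hdiff : DifferentiableWithinAt ℝ (d i) (Icc a b) t := by
      exact (hf.differentiableOn_iteratedDerivWithin (by exact_mod_cast hik) hs) t ht
    have hder : HasDerivWithinAt (d i) (d (i+1) t) (Icc a b) t := by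
      have := hdiff.hasDerivWithinAt
      rwa [show derivWithin (d i) (Icc a b) t = d (i+1) t from
        (congrFun iteratedDerivWithin_succ t).symm] at this
    have hpow : HasDerivWithinAt (fun t => (y - t) ^ i)
        (-((i : ℝ) * (y - t) ^ (i - 1))) (Icc a b) t := by
      have h1 : HasDerivWithinAt (fun t : ℝ => y - t) (-1) (Icc a b) t :=
        (hasDerivWithinAt_id t _).const_sub y
      simpa using h1.fun_pow i
    have := (hder.fun_mul hpow).div_const (i.factorial : ℝ)
    refine this.congr_deriv ?_
    ring
  have hsum := HasDerivWithinAt.fun_sum key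
  have : HasDerivWithinAt (fun t => taylorPolyWithin f (Icc a b) k t y)
      (∑ i ∈ Finset.range (k + 1), (d (i+1) t * (y - t) ^ i / (i.factorial : ℝ)
          - d i t * (i : ℝ) * (y - t) ^ (i - 1) / (i.factorial : ℝ))) (Icc a b) t := by
    exact hsum
  convert this using 1
  rw [Finset.sum_sub_distrib]
  have e1 : ∑ i ∈ Finset.range (k + 1), d i t * (i : ℝ) * (y - t) ^ (i - 1) / (i.factorial : ℝ)
      = ∑ i ∈ Finset.range k, d (i+1) t * (y - t) ^ i / (i.factorial : ℝ) := by
    rw [Finset.sum_range_succ']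
    simp only [Nat.cast_zero, mul_zero, zero_mul, Nat.factorial_zero, Nat.cast_one]
    rw [show (0:ℝ)/1 = 0 by norm_num, add_zero]
    apply Finset.sum_congr rfl
    intro i _
    have : ((i+1).factorial : ℝ) = (i+1) * (i.factorial : ℝ) := by
      rw [Nat.factorial_succ]; push_cast; ring
    rw [this]
    have h0 : (i.factorial : ℝ) ≠ 0 := Nat.cast_ne_zero.mpr i.factorial_ne_zero
    have h1 : ((i:ℝ)+1) ≠ 0 := by positivity
    field_simp
    rw [Nat.add_sub_cancel]; push_cast; ring
  rw [e1, Finset.sum_range_succ]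
  ring

theorem taylorPoly_self (f : ℝ → ℝ) (s : Set ℝ) (k : ℕ) (y : ℝ) :
    taylorPolyWithin f s k y y = f y := by
  unfold taylorPolyWithin
  rw [Finset.sum_eq_single 0]
  · simp [iteratedDerivWithin_zero]
  · intro i _ hi
    simp [zero_pow hi]
  · simp

theorem taylorPoly_succ (f : ℝ → ℝ) (s : Set ℝ) (k : ℕ) (t y : ℝ) :
    taylorPolyWithin f s (k+1) t y = taylorPolyWithin f s k t y
      + iteratedDerivWithin (k+1) f s t * (y - t) ^ (k+1) / ((k+1).factorial : ℝ) := by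
  unfold taylorPolyWithin
  rw [Finset.sum_range_succ]

theorem g_hasDeriv (a b : ℝ) (hab : a < b) (k : ℕ) (f : ℝ → ℝ)
    (hf : ContDiffOn ℝ (k + 1) f (Icc a b)) {t y : ℝ} (ht : t ∈ Icc a b) (hyt : y ≠ t) :
    HasDerivWithinAt (fun t => (f y - taylorPolyWithin f (Icc a b) k t y) / (y - t) ^ (k + 1))
      (((k:ℝ) + 1) * ((f y - taylorPolyWithin f (Icc a b) (k+1) t y) / (y - t) ^ (k + 2)))
      (Icc a b) t := by
  have hy : y - t ≠ 0 := sub_ne_zero.mpr hyt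
  have hden : (y - t) ^ (k+1) ≠ 0 := pow_ne_zero _ hy
  have hnum : HasDerivWithinAt (fun t => f y - taylorPolyWithin f (Icc a b) k t y)
      (-(iteratedDerivWithin (k + 1) f (Icc a b) t * (y - t) ^ k / (k.factorial : ℝ)))
      (Icc a b) t := (taylorPoly_hasDeriv a b hab k f hf y ht).const_sub (f y)
  have hpow : HasDerivWithinAt (fun t : ℝ => (y - t) ^ (k+1))
      (-(((k:ℝ)+1) * (y - t) ^ k)) (Icc a b) t := by
    have h1 : HasDerivWithinAt (fun t : ℝ => y - t) (-1) (Icc a b) t :=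
      (hasDerivWithinAt_id t _).const_sub y
    have := h1.fun_pow (k+1)
    refine this.congr_deriv ?_
    push_cast; ring_nf
  have := hnum.fun_div hpow hden
  refine this.congr_deriv ?_
  rw [taylorPoly_succ]
  have hfac : ((k+1).factorial : ℝ) = ((k:ℝ)+1) * (k.factorial : ℝ) := by
    rw [Nat.factorial_succ]; push_cast; ring
  rw [hfac]
  have hk0 : (k.factorial : ℝ) ≠ 0 := Nat.cast_ne_zero.mpr k.factorial_ne_zero
  have hk1 : ((k:ℝ)+1) ≠ 0 := by positivity
  field_simp
  ring

section
variable {a b : ℝ} {k : ℕ} {f : ℝ → ℝ}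

theorem contOn_d (hab : a < b) (hf : ContDiffOn ℝ (k + 1) f (Icc a b)) {i : ℕ} (hik : i ≤ k + 1) :
    ContinuousOn (iteratedDerivWithin i f (Icc a b)) (Icc a b) :=
  hf.continuousOn_iteratedDerivWithin (by exact_mod_cast hik) (uniqueDiffOn_Icc hab)

theorem contOn_P (hab : a < b) (hf : ContDiffOn ℝ (k + 1) f (Icc a b)) {m : ℕ} (hm : m ≤ k + 1)
    (y : ℝ) : ContinuousOn (fun t => taylorPolyWithin f (Icc a b) m t y) (Icc a b) := by
  unfold taylorPolyWithin
  apply continuousOn_finset_sum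
  intro i hi
  have hik : i ≤ k + 1 := le_trans (Nat.lt_succ_iff.mp (Finset.mem_range.mp hi)) hm
  exact ((contOn_d hab hf hik).mul ((continuousOn_const.sub continuousOn_id).pow i)).div_const _

theorem taylor_integral_remainder' (hab : a < b) (hf : ContDiffOn ℝ (k + 1) f (Icc a b))
    {t y : ℝ} (ht : t ∈ Icc a b) (hy : y ∈ Icc a b) :
    f y - taylorPolyWithin f (Icc a b) k t y
      = ∫ τ in t..y, iteratedDerivWithin (k+1) f (Icc a b) τ * (y - τ) ^ k / (k.factorial : ℝ) := by
  have huIcc : uIcc t y ⊆ Icc a b := uIcc_subset_Icc ht hy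
  have hFc : ContinuousOn (fun τ => f y - taylorPolyWithin f (Icc a b) k τ y) (uIcc t y) :=
    ContinuousOn.sub continuousOn_const ((contOn_P hab hf (Nat.le_succ k) y).mono huIcc)
  have hint : IntervalIntegrable
      (fun τ => -(iteratedDerivWithin (k+1) f (Icc a b) τ * (y - τ) ^ k / (k.factorial : ℝ)))
      MeasureTheory.volume t y := by
    apply ContinuousOn.intervalIntegrable
    exact (((contOn_d hab hf le_rfl).mono huIcc).mul
      ((continuousOn_const.sub continuousOn_id).pow k)).div_const _ |>.neg
  have hderiv : ∀ τ ∈ Ioo (min t y) (max t y),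
      HasDerivWithinAt (fun τ => f y - taylorPolyWithin f (Icc a b) k τ y)
        (-(iteratedDerivWithin (k+1) f (Icc a b) τ * (y - τ) ^ k / (k.factorial : ℝ)))
        (Ioi τ) τ := by
    intro τ hτ
    have hτab : τ ∈ Ioo a b :=
      ⟨lt_of_le_of_lt (le_min ht.1 hy.1) hτ.1, lt_of_lt_of_le hτ.2 (max_le ht.2 hy.2)⟩
    have h1 := (taylorPoly_hasDeriv a b hab k f hf y (Ioo_subset_Icc_self hτab)).const_sub (f y)
    exact (h1.hasDerivAt (Icc_mem_nhds hτab.1 hτab.2)).hasDerivWithinAt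
  have := integral_eq_sub_of_hasDeriv_right hFc hderiv hint
  rw [taylorPoly_self] at this
  simp only [sub_self] at this
  rw [intervalIntegral.integral_neg] at this
  linarith [this]

theorem M_nonneg (hab : a < b) {α M : ℝ} (hα : 0 < α)
    (hH : ∀ x ∈ Icc a b, ∀ y ∈ Icc a b,
      |iteratedDerivWithin (k + 1) f (Icc a b) x - iteratedDerivWithin (k + 1) f (Icc a b) y|
        ≤ M * |x - y| ^ α) : 0 ≤ M := by
  have h := hH a (left_mem_Icc.mpr hab.le) b (right_mem_Icc.mpr hab.le)
  have h2 : (0:ℝ) < |a - b| ^ α := Real.rpow_pos_of_pos (abs_pos.mpr (by linarith)) α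
  nlinarith [abs_nonneg (iteratedDerivWithin (k + 1) f (Icc a b) a
    - iteratedDerivWithin (k + 1) f (Icc a b) b)]

theorem taylor_holder_bound (hab : a < b) {α M : ℝ} (hα : 0 < α)
    (hf : ContDiffOn ℝ (k + 1) f (Icc a b))
    (hH : ∀ x ∈ Icc a b, ∀ y ∈ Icc a b,
      |iteratedDerivWithin (k + 1) f (Icc a b) x - iteratedDerivWithin (k + 1) f (Icc a b) y|
        ≤ M * |x - y| ^ α)
    {t y : ℝ} (ht : t ∈ Icc a b) (hy : y ∈ Icc a b) :
    |f y - taylorPolyWithin f (Icc a b) (k+1) t y|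
      ≤ M / (k.factorial : ℝ) * (|y - t| ^ (k+1) * |y - t| ^ α) := by
  set d := iteratedDerivWithin (k+1) f (Icc a b) with hd
  have huIcc : uIcc t y ⊆ Icc a b := uIcc_subset_Icc ht hy
  have hint1 : IntervalIntegrable (fun τ => d τ * (y - τ) ^ k / (k.factorial : ℝ))
      MeasureTheory.volume t y :=
    ContinuousOn.intervalIntegrable ((((contOn_d hab hf le_rfl).mono huIcc).mul
      ((continuousOn_const.sub continuousOn_id).pow k)).div_const _)
  have hint2 : IntervalIntegrable (fun τ => d t * (y - τ) ^ k / (k.factorial : ℝ))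
      MeasureTheory.volume t y :=
    ContinuousOn.intervalIntegrable ((continuousOn_const.mul
      ((continuousOn_const.sub continuousOn_id).pow k)).div_const _)
  have hpowint : ∫ τ in t..y, (y - τ) ^ k = (y - t)^(k+1) / ((k:ℝ)+1) := by
    have := intervalIntegral.integral_comp_sub_left (a := t) (b := y) (fun z => z ^ k) y
    rw [this]
    simp [integral_pow]
  have key : f y - taylorPolyWithin f (Icc a b) (k+1) t y
      = ∫ τ in t..y, (d τ - d t) * (y - τ) ^ k / (k.factorial : ℝ) := by
    have e1 : ∀ τ : ℝ, (d τ - d t) * (y - τ) ^ k / (k.factorial : ℝ)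
        = d τ * (y - τ) ^ k / (k.factorial : ℝ) - d t * (y - τ) ^ k / (k.factorial : ℝ) := by
      intro τ; ring
    simp_rw [e1]
    rw [intervalIntegral.integral_sub hint1 hint2]
    rw [← taylor_integral_remainder' hab hf ht hy]
    have e2 : ∫ τ in t..y, d t * (y - τ) ^ k / (k.factorial : ℝ)
        = d t / (k.factorial : ℝ) * ∫ τ in t..y, (y - τ) ^ k := by
      rw [← intervalIntegral.integral_const_mul]
      congr 1; ext τ; ring
    rw [e2, hpowint, taylorPoly_succ]
    have hfac : ((k+1).factorial : ℝ) = ((k:ℝ)+1) * (k.factorial : ℝ) := by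
      rw [Nat.factorial_succ]; push_cast; ring
    rw [hfac]
    have hk0 : (k.factorial : ℝ) ≠ 0 := Nat.cast_ne_zero.mpr k.factorial_ne_zero
    have hk1 : ((k:ℝ)+1) ≠ 0 := by positivity
    field_simp
    ring
  rw [key]
  have hbound : ∀ τ ∈ Ι t y, ‖(d τ - d t) * (y - τ) ^ k / (k.factorial : ℝ)‖
      ≤ M * |y - t| ^ α * |y - t| ^ k / (k.factorial : ℝ) := by
    intro τ hτ
    have hτIcc : τ ∈ Icc (min t y) (max t y) := Ioc_subset_Icc_self hτ
    have hτab : τ ∈ Icc a b := huIcc (by rwa [uIcc] )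
    have h1 : |τ - t| ≤ |y - t| := by
      rw [abs_sub_le_iff]
      rcases le_total t y with h | h <;>
        simp [min_eq_left, min_eq_right, max_eq_left, max_eq_right, h] at hτIcc <;>
        rcases abs_cases (y - t) with ⟨h2, _⟩ | ⟨h2, _⟩ <;> constructor <;> linarith
    have h2 : |y - τ| ≤ |y - t| := by
      rw [abs_sub_le_iff]
      rcases le_total t y with h | h <;>
        simp [min_eq_left, min_eq_right, max_eq_left, max_eq_right, h] at hτIcc <;>
        rcases abs_cases (y - t) with ⟨h2, _⟩ | ⟨h2, _⟩ <;> constructor <;> linarith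
    have hH1 : |d τ - d t| ≤ M * |y - t| ^ α := by
      refine le_trans (hH τ hτab t ht) ?_
      have := Real.rpow_le_rpow (abs_nonneg _) h1 hα.le
      nlinarith [M_nonneg hab hα hH, this, Real.rpow_nonneg (abs_nonneg (τ - t)) α]
    have hk0 : (0:ℝ) < (k.factorial : ℝ) := by positivity
    rw [norm_div, norm_mul, Real.norm_eq_abs, Real.norm_eq_abs, Real.norm_eq_abs]
    rw [abs_of_pos hk0]
    have hyk : |(y - τ) ^ k| ≤ |y - t| ^ k := by
      rw [abs_pow]; exact pow_le_pow_left₀ (abs_nonneg _) h2 k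
    gcongr <;> first
      | exact hH1
      | exact hyk
      | exact mul_nonneg (M_nonneg hab hα hH) (Real.rpow_nonneg (abs_nonneg _) α)
      | exact abs_nonneg _
  have := intervalIntegral.norm_integral_le_of_norm_le_const hbound
  rw [Real.norm_eq_abs] at this
  refine this.trans_eq ?_
  rw [pow_succ]
  ring
end
section
variable {a b α M : ℝ} {k : ℕ} {f : ℝ → ℝ}

theorem gprime_bound (hab : a < b) (hα : 0 < α) (hα1 : α < 1)
    (hf : ContDiffOn ℝ (k + 1) f (Icc a b))
    (hH : ∀ x ∈ Icc a b, ∀ y ∈ Icc a b,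
      |iteratedDerivWithin (k + 1) f (Icc a b) x - iteratedDerivWithin (k + 1) f (Icc a b) y|
        ≤ M * |x - y| ^ α)
    {t y : ℝ} (ht : t ∈ Icc a b) (hy : y ∈ Icc a b) :
    |((k:ℝ)+1) * ((f y - taylorPolyWithin f (Icc a b) (k+1) t y) / (y - t) ^ (k+2))|
      ≤ ((k:ℝ)+1) * M / (k.factorial : ℝ) * |y - t| ^ (α - 1) := by
  by_cases hyt : y = t
  · subst hyt
    rw [taylorPoly_self, sub_self, zero_div, mul_zero, abs_zero, sub_self, abs_zero,
      Real.zero_rpow (by linarith)]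
    simp
  · have hp : (0:ℝ) < |y - t| := abs_pos.mpr (sub_ne_zero.mpr hyt)
    have hB := taylor_holder_bound hab hα hf hH ht hy
    have habs : |((k:ℝ)+1) * ((f y - taylorPolyWithin f (Icc a b) (k+1) t y) / (y - t) ^ (k+2))|
        = ((k:ℝ)+1) * |f y - taylorPolyWithin f (Icc a b) (k+1) t y| / |y - t| ^ (k+2) := by
      rw [abs_mul, abs_div, abs_pow, abs_of_pos (by positivity : (0:ℝ) < (k:ℝ)+1)]
      ring
    rw [habs]
    have hrpow : |y - t| ^ (α - 1) = |y - t| ^ α / |y - t| := by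
      rw [Real.rpow_sub hp, Real.rpow_one]
    rw [hrpow]
    have key : ((k:ℝ)+1) * (M / (k.factorial : ℝ) * (|y - t| ^ (k+1) * |y - t| ^ α)) / |y - t| ^ (k+2)
        = ((k:ℝ)+1) * M / (k.factorial : ℝ) * (|y - t| ^ α / |y - t|) := by
      rw [pow_succ]
      have h2 : |y - t| ^ (k+1) ≠ 0 := by positivity
      have h3 : (k.factorial : ℝ) ≠ 0 := Nat.cast_ne_zero.mpr k.factorial_ne_zero
      field_simp
      ring
    calc ((k:ℝ)+1) * |f y - taylorPolyWithin f (Icc a b) (k+1) t y| / |y - t| ^ (k+2)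
        ≤ ((k:ℝ)+1) * (M / (k.factorial : ℝ) * (|y - t| ^ (k+1) * |y - t| ^ α)) / |y - t| ^ (k+2) := by
          gcongr
      _ = _ := key

theorem g_bound (hab : a < b) (hα : 0 < α)
    (hf : ContDiffOn ℝ (k + 1) f (Icc a b))
    (hH : ∀ x ∈ Icc a b, ∀ y ∈ Icc a b,
      |iteratedDerivWithin (k + 1) f (Icc a b) x - iteratedDerivWithin (k + 1) f (Icc a b) y|
        ≤ M * |x - y| ^ α)
    {C₃ : ℝ} (hC₃ : ∀ x ∈ Icc a b, |iteratedDerivWithin (k+1) f (Icc a b) x| ≤ C₃)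
    {t y : ℝ} (ht : t ∈ Icc a b) (hy : y ∈ Icc a b) :
    |(f y - taylorPolyWithin f (Icc a b) k t y) / (y - t) ^ (k+1)|
      ≤ M / (k.factorial : ℝ) * (b - a) ^ α + C₃ := by
  have hC₃0 : 0 ≤ C₃ := le_trans (abs_nonneg _) (hC₃ a (left_mem_Icc.mpr hab.le))
  have hM := M_nonneg hab hα hH
  have hba : (0:ℝ) ≤ (b-a) ^ α := Real.rpow_nonneg (by linarith) α
  have hRHS : (0:ℝ) ≤ M / (k.factorial : ℝ) * (b - a) ^ α + C₃ := by positivity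
  by_cases hyt : y = t
  · subst hyt
    rw [taylorPoly_self, sub_self, zero_div, abs_zero]
    exact hRHS
  · have hp : (0:ℝ) < |y - t| := abs_pos.mpr (sub_ne_zero.mpr hyt)
    have hyta : |y - t| ≤ b - a := by
      rw [abs_sub_le_iff]; constructor
      · linarith [hy.2, ht.1]
      · linarith [ht.2, hy.1]
    have hnum : |f y - taylorPolyWithin f (Icc a b) k t y|
        ≤ (M / (k.factorial : ℝ) * (b - a) ^ α + C₃) * |y - t| ^ (k+1) := by
      have e : f y - taylorPolyWithin f (Icc a b) k t y
          = (f y - taylorPolyWithin f (Icc a b) (k+1) t y)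
            + iteratedDerivWithin (k+1) f (Icc a b) t * (y - t) ^ (k+1) / ((k+1).factorial : ℝ) := by
        rw [taylorPoly_succ]; ring
      rw [e]
      refine (abs_add_le _ _).trans ?_
      have h1 := taylor_holder_bound hab hα hf hH ht hy
      have h2 : |iteratedDerivWithin (k+1) f (Icc a b) t * (y - t) ^ (k+1) / ((k+1).factorial : ℝ)|
          ≤ C₃ * |y - t| ^ (k+1) := by
        rw [abs_div, abs_mul, abs_pow, abs_of_pos (by positivity : (0:ℝ) < ((k+1).factorial : ℝ))]
        have hfa : (1:ℝ) ≤ ((k+1).factorial : ℝ) := by exact_mod_cast (k+1).factorial_pos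
        calc |iteratedDerivWithin (k+1) f (Icc a b) t| * |y - t| ^ (k+1) / ((k+1).factorial : ℝ)
            ≤ C₃ * |y - t| ^ (k+1) / 1 := by
              gcongr
              exact hC₃ t ht
          _ = C₃ * |y - t| ^ (k+1) := by ring
      have h3 : |y - t| ^ α ≤ (b - a) ^ α := Real.rpow_le_rpow (abs_nonneg _) hyta hα.le
      have h4 : (0:ℝ) ≤ |y - t| ^ (k+1) := by positivity
      have h5 : M / (k.factorial : ℝ) * (|y - t| ^ (k+1) * |y - t| ^ α)
          ≤ M / (k.factorial : ℝ) * (b - a) ^ α * |y - t| ^ (k+1) := by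
        have : M / (k.factorial : ℝ) * (|y - t| ^ (k+1) * |y - t| ^ α)
            = (M / (k.factorial : ℝ) * |y - t| ^ α) * |y - t| ^ (k+1) := by ring
        rw [this]
        gcongr
      nlinarith
    rw [abs_div, abs_pow, div_le_iff₀ (by positivity : (0:ℝ) < |y - t| ^ (k+1))]
    exact hnum
end
section
open MeasureTheory
variable {a b α M : ℝ} {k : ℕ} {f : ℝ → ℝ}

theorem rpow_kernel_intervalIntegrable (hα : 0 < α) (c r : ℝ) (hr : 0 < r) :
    IntervalIntegrable (fun y => |y - c| ^ (α - 1)) volume (c - r) (c + r) := by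
  have hm1 : (-1:ℝ) < α - 1 := by linarith
  have hright : IntervalIntegrable (fun y => |y - c| ^ (α - 1)) volume c (c + r) := by
    rw [intervalIntegrable_iff, uIoc_of_le (by linarith)]
    refine IntegrableOn.congr_fun (f := fun y => (y - c) ^ (α - 1)) ?_ ?_ measurableSet_Ioc
    · have h0 := ((intervalIntegrable_rpow' hm1 (a := 0) (b := r)).comp_sub_right c).1
      have e : (0:ℝ) + c = c := by ring
      rw [e] at h0
      simpa [add_comm] using h0
    · intro z hz
      show (z - c) ^ (α - 1) = |z - c| ^ (α - 1)
      rw [abs_of_pos (by linarith [hz.1] : (0:ℝ) < z - c)]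
  have hleft : IntervalIntegrable (fun y => |y - c| ^ (α - 1)) volume (c - r) c := by
    rw [intervalIntegrable_iff, uIoc_of_le (by linarith)]
    refine IntegrableOn.congr_fun (f := fun y => (c - y) ^ (α - 1)) ?_ ?_ measurableSet_Ioc
    · have h0 := ((intervalIntegrable_rpow' hm1 (a := 0) (b := r)).comp_sub_left c).2
      have e : c - (0:ℝ) = c := by ring
      rw [e] at h0
      exact h0
    · intro z hz
      show (c - z) ^ (α - 1) = |z - c| ^ (α - 1)
      rcases eq_or_lt_of_le hz.2 with h | h
      · rw [h]; simp
      · rw [abs_of_neg (by linarith : z - c < 0), neg_sub]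
  exact hleft.trans hright

theorem rpow_kernel_integral (hα : 0 < α) (c r : ℝ) (hr : 0 < r) :
    ∫ y in (c - r)..(c + r), |y - c| ^ (α - 1) = 2 * r ^ α / α := by
  have hm1 : (-1:ℝ) < α - 1 := by linarith
  have base : ∫ x in (0:ℝ)..r, x ^ (α - 1) = r ^ α / α := by
    rw [integral_rpow (Or.inl hm1)]
    rw [show α - 1 + 1 = α by ring, Real.zero_rpow (ne_of_gt hα)]
    ring
  have hright : ∫ y in c..(c + r), |y - c| ^ (α - 1) = r ^ α / α := by
    rw [intervalIntegral.integral_congr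
      (g := fun y => (y - c) ^ (α - 1)) ?_]
    · have := intervalIntegral.integral_comp_sub_right (a := c) (b := c + r)
        (fun z => z ^ (α - 1)) c
      rw [this, show c - c = (0:ℝ) by ring, show c + r - c = r by ring, base]
    · intro z hz
      rw [uIcc_of_le (by linarith)] at hz
      show |z - c| ^ (α - 1) = (z - c) ^ (α - 1)
      rcases eq_or_lt_of_le hz.1 with h | h
      · rw [← h]; simp
      · rw [abs_of_pos (by linarith)]
  have hleft : ∫ y in (c - r)..c, |y - c| ^ (α - 1) = r ^ α / α := by
    rw [intervalIntegral.integral_congr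
      (g := fun y => (c - y) ^ (α - 1)) ?_]
    · have := intervalIntegral.integral_comp_sub_left (a := c - r) (b := c)
        (fun z => z ^ (α - 1)) c
      rw [this, show c - c = (0:ℝ) by ring, show c - (c - r) = r by ring, base]
    · intro z hz
      rw [uIcc_of_le (by linarith)] at hz
      show |z - c| ^ (α - 1) = (c - z) ^ (α - 1)
      rcases eq_or_lt_of_le hz.2 with h | h
      · rw [h]; simp
      · rw [abs_of_neg (by linarith), neg_sub]
  have hI := rpow_kernel_intervalIntegrable hα c r hr
  have h1 : IntervalIntegrable (fun y => |y - c| ^ (α - 1)) volume (c - r) c :=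
    hI.mono_set (by
      rw [uIcc_of_le (by linarith : c - r ≤ c), uIcc_of_le (by linarith : c - r ≤ c + r)]
      exact Icc_subset_Icc le_rfl (by linarith))
  have h2 : IntervalIntegrable (fun y => |y - c| ^ (α - 1)) volume c (c + r) :=
    hI.mono_set (by
      rw [uIcc_of_le (by linarith : c ≤ c + r), uIcc_of_le (by linarith : c - r ≤ c + r)]
      exact Icc_subset_Icc (by linarith) le_rfl)
  rw [← intervalIntegral.integral_add_adjacent_intervals h1 h2, hleft, hright]
  ring
end
section
open MeasureTheory
variable {a b α M : ℝ} {k : ℕ} {f : ℝ → ℝ}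

theorem rpow_kernel_setIntegral_le (hα : 0 < α) (c r : ℝ) (hr : 0 < r) {E : Set ℝ}
    (hsub : E ⊆ Ioc (c - r) (c + r)) :
    IntegrableOn (fun y => |y - c| ^ (α - 1)) E volume ∧
      ∫ y in E, |y - c| ^ (α - 1) ≤ 2 * r ^ α / α := by
  have hbig : IntegrableOn (fun y => |y - c| ^ (α - 1)) (Ioc (c - r) (c + r)) volume :=
    (rpow_kernel_intervalIntegrable hα c r hr).1
  refine ⟨hbig.mono_set hsub, ?_⟩
  have h1 : ∫ y in E, |y - c| ^ (α - 1) ≤ ∫ y in Ioc (c - r) (c + r), |y - c| ^ (α - 1) := by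
    apply setIntegral_mono_set hbig
    · filter_upwards with y using Real.rpow_nonneg (abs_nonneg _) _
    · exact HasSubset.Subset.eventuallyLE hsub
  refine h1.trans ?_
  rw [← intervalIntegral.integral_of_le (by linarith), rpow_kernel_integral hα c r hr]

theorem contOn_num_y (hab : a < b) (hf : ContDiffOn ℝ (k + 1) f (Icc a b)) (m : ℕ) (t : ℝ) :
    ContinuousOn (fun y => f y - taylorPolyWithin f (Icc a b) m t y) (Icc a b) := by
  apply (hf.continuousOn).sub
  unfold taylorPolyWithin
  apply continuousOn_finset_sum
  intro i _
  exact ((continuousOn_const.mul ((continuousOn_id.sub continuousOn_const).pow i)).div_const _)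

theorem aesm_y (hab : a < b) (hf : ContDiffOn ℝ (k + 1) f (Icc a b)) (m p : ℕ) (t : ℝ)
    {E : Set ℝ} (hE : MeasurableSet E) (hEsub : E ⊆ Icc a b) (c : ℝ) :
    AEStronglyMeasurable (fun y => c * ((f y - taylorPolyWithin f (Icc a b) m t y) / (y - t) ^ p))
      (volume.restrict E) := by
  apply AEStronglyMeasurable.const_mul
  exact ((((contOn_num_y hab hf m t).mono hEsub).aestronglyMeasurable hE).aemeasurable.div
    ((by continuity : Continuous (fun y : ℝ => (y - t) ^ p)).measurable.aemeasurable)).aestronglyMeasurable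

theorem aesm_t (hab : a < b) (hf : ContDiffOn ℝ (k + 1) f (Icc a b)) {m : ℕ} (hm : m ≤ k + 1)
    (p : ℕ) (y : ℝ) {E : Set ℝ} (hE : MeasurableSet E) (hEsub : E ⊆ Icc a b) (c : ℝ) :
    AEStronglyMeasurable (fun t => c * ((f y - taylorPolyWithin f (Icc a b) m t y) / (y - t) ^ p))
      (volume.restrict E) := by
  apply AEStronglyMeasurable.const_mul
  exact (((ContinuousOn.sub continuousOn_const
      ((contOn_P hab hf hm y).mono hEsub)).aestronglyMeasurable hE).aemeasurable.div
    ((by continuity : Continuous (fun t : ℝ => (y - t) ^ p)).measurable.aemeasurable)).aestronglyMeasurable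

theorem contOn_num_prod (hab : a < b) (hf : ContDiffOn ℝ (k + 1) f (Icc a b)) {m : ℕ}
    (hm : m ≤ k + 1) :
    ContinuousOn (fun q : ℝ × ℝ => f q.2 - taylorPolyWithin f (Icc a b) m q.1 q.2)
      (Icc a b ×ˢ Icc a b) := by
  apply ContinuousOn.sub
  · exact hf.continuousOn.comp continuous_snd.continuousOn (fun q hq => hq.2)
  · unfold taylorPolyWithin
    apply continuousOn_finset_sum
    intro i hi
    have hik : i ≤ k + 1 := le_trans (Nat.lt_succ_iff.mp (Finset.mem_range.mp hi)) hm
    apply ContinuousOn.div_const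
    apply ContinuousOn.mul
    · exact (contOn_d hab hf hik).comp continuous_fst.continuousOn (fun q hq => hq.1)
    · exact ((continuous_snd.sub continuous_fst).pow i).continuousOn

theorem aesm_prod (hab : a < b) (hf : ContDiffOn ℝ (k + 1) f (Icc a b)) {m : ℕ} (hm : m ≤ k + 1)
    (p : ℕ) {A B : Set ℝ} (hA : MeasurableSet A) (hB : MeasurableSet B)
    (hAsub : A ⊆ Icc a b) (hBsub : B ⊆ Icc a b) (c : ℝ) :
    AEStronglyMeasurable
      (fun q : ℝ × ℝ => c * ((f q.2 - taylorPolyWithin f (Icc a b) m q.1 q.2) / (q.2 - q.1) ^ p))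
      ((volume.restrict A).prod (volume.restrict B)) := by
  rw [Measure.prod_restrict]
  apply AEStronglyMeasurable.const_mul
  exact ((((contOn_num_prod hab hf hm).mono
      (prod_mono hAsub hBsub)).aestronglyMeasurable (hA.prod hB)).aemeasurable.div
    ((by continuity : Continuous (fun q : ℝ × ℝ => (q.2 - q.1) ^ p)).measurable.aemeasurable)).aestronglyMeasurable

theorem int_t (hab : a < b) (hα : 0 < α) (hα1 : α < 1)
    (hf : ContDiffOn ℝ (k + 1) f (Icc a b))
    (hH : ∀ x ∈ Icc a b, ∀ y ∈ Icc a b,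
      |iteratedDerivWithin (k + 1) f (Icc a b) x - iteratedDerivWithin (k + 1) f (Icc a b) y|
        ≤ M * |x - y| ^ α)
    {c d y : ℝ} (hc : c ∈ Icc a b) (hd : d ∈ Icc a b) (hy : y ∈ Icc a b) :
    IntervalIntegrable
      (fun t => ((k:ℝ)+1) * ((f y - taylorPolyWithin f (Icc a b) (k+1) t y) / (y - t) ^ (k+2)))
      volume c d := by
  rw [intervalIntegrable_iff]
  have hsub1 : Ι c d ⊆ Icc a b := by
    rw [uIoc]
    exact fun t htmem => ⟨le_trans (le_min hc.1 hd.1) (le_of_lt htmem.1),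
      le_trans htmem.2 (max_le hc.2 hd.2)⟩
  have hsub2 : Ι c d ⊆ Ioc (y - 2*(b-a)) (y + 2*(b-a)) := by
    intro t htmem
    have ht := hsub1 htmem
    constructor
    · have : y - 2*(b-a) < a := by nlinarith [hy.2]
      linarith [ht.1]
    · have : b ≤ y + 2*(b-a) := by nlinarith [hy.1]
      linarith [ht.2]
  have hdom := rpow_kernel_setIntegral_le hα y (2*(b-a)) (by linarith) hsub2
  apply Integrable.mono' (hdom.1.const_mul (((k:ℝ)+1) * M / (k.factorial : ℝ)))
  · exact aesm_t hab hf le_rfl (k+2) y measurableSet_uIoc hsub1 _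
  · filter_upwards [ae_restrict_mem measurableSet_uIoc] with t htmem
    have ht := hsub1 htmem
    have := gprime_bound hab hα hα1 hf hH ht hy
    rw [Real.norm_eq_abs]
    refine this.trans ?_
    rw [abs_sub_comm]
end
section
open MeasureTheory
variable {a b α M : ℝ} {k : ℕ} {f : ℝ → ℝ}

theorem pointwise_ftc (hab : a < b) (hα : 0 < α) (hα1 : α < 1)
    (hf : ContDiffOn ℝ (k + 1) f (Icc a b))
    (hH : ∀ x ∈ Icc a b, ∀ y ∈ Icc a b,
      |iteratedDerivWithin (k + 1) f (Icc a b) x - iteratedDerivWithin (k + 1) f (Icc a b) y|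
        ≤ M * |x - y| ^ α)
    {x u y : ℝ} (hx : x ∈ Icc a b) (hu : u ∈ Icc a b) (hy : y ∈ Icc a b)
    (hyx : y ≠ x) (hyu : y ≠ u) :
    (f y - taylorPolyWithin f (Icc a b) k u y) / (y - u) ^ (k+1)
      - (f y - taylorPolyWithin f (Icc a b) k x y) / (y - x) ^ (k+1)
    = ∫ t in x..u, ((k:ℝ)+1) * ((f y - taylorPolyWithin f (Icc a b) (k+1) t y) / (y - t) ^ (k+2)) := by
  set Φ : ℝ → ℝ := fun τ => (f y - taylorPolyWithin f (Icc a b) (k+1) τ y) / (y - τ) ^ (k+1)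
      + iteratedDerivWithin (k+1) f (Icc a b) τ / (((k+1).factorial : ℝ)) with hΦ
  have hagree : ∀ τ : ℝ, τ ≠ y →
      Φ τ = (f y - taylorPolyWithin f (Icc a b) k τ y) / (y - τ) ^ (k+1) := by
    intro τ hτ
    have hyτ : y - τ ≠ 0 := sub_ne_zero.mpr (Ne.symm hτ)
    have hpow : (y - τ) ^ (k+1) ≠ 0 := pow_ne_zero _ hyτ
    have hfac : (((k+1).factorial : ℝ)) ≠ 0 := Nat.cast_ne_zero.mpr (k+1).factorial_ne_zero
    rw [hΦ]
    simp only
    rw [taylorPoly_succ]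
    field_simp
    ring
  have hcont : ContinuousOn Φ (Icc a b) := by
    apply ContinuousOn.add _ ((contOn_d hab hf le_rfl).div_const _)
    intro τ0 hτ0
    by_cases hτy : τ0 = y
    · subst hτy
      unfold ContinuousWithinAt
      have hv : (f τ0 - taylorPolyWithin f (Icc a b) (k+1) τ0 τ0) / (τ0 - τ0) ^ (k+1) = 0 := by
        rw [taylorPoly_self, sub_self, zero_div]
      have hv' : ((fun x => (f τ0 - taylorPolyWithin f (Icc a b) (k + 1) x τ0) / (τ0 - x) ^ (k + 1)) τ0) = 0 := hv
      rw [hv']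
      have h1 : Filter.Tendsto (fun τ : ℝ => |τ0 - τ|) (nhdsWithin τ0 (Icc a b)) (nhds 0) := by
        have hc : Continuous fun τ : ℝ => |τ0 - τ| := by continuity
        have := hc.tendsto τ0
        simp only [sub_self, abs_zero] at this
        exact this.mono_left nhdsWithin_le_nhds
      have h2 : Filter.Tendsto (fun τ : ℝ => M / (k.factorial : ℝ) * |τ0 - τ| ^ α)
          (nhdsWithin τ0 (Icc a b)) (nhds 0) := by
        have h3 := (Real.continuousAt_rpow_const 0 α (Or.inr hα.le)).tendsto
        rw [Real.zero_rpow hα.ne'] at h3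
        have := (h3.comp h1).const_mul (M / (k.factorial : ℝ))
        simpa using this
      apply squeeze_zero_norm' _ h2
      filter_upwards [self_mem_nhdsWithin] with τ hτmem
      by_cases hτy2 : τ = τ0
      · subst hτy2
        rw [taylorPoly_self, sub_self, zero_div, norm_zero, sub_self, abs_zero,
          Real.zero_rpow hα.ne']
        simp
      · have hyτ : (0:ℝ) < |τ0 - τ| := abs_pos.mpr (sub_ne_zero.mpr (Ne.symm hτy2))
        have hB := taylor_holder_bound hab hα hf hH hτmem hy
        rw [Real.norm_eq_abs, abs_div, abs_pow]
        rw [div_le_iff₀ (by positivity)]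
        calc |f τ0 - taylorPolyWithin f (Icc a b) (k+1) τ τ0|
            ≤ M / (k.factorial : ℝ) * (|τ0 - τ| ^ (k+1) * |τ0 - τ| ^ α) := hB
          _ = M / (k.factorial : ℝ) * |τ0 - τ| ^ α * |τ0 - τ| ^ (k+1) := by ring
    · apply ContinuousWithinAt.div
      · exact (ContinuousOn.sub continuousOn_const (contOn_P hab hf le_rfl y)) τ0 hτ0
      · exact (Continuous.continuousWithinAt (by continuity))
      · exact pow_ne_zero _ (sub_ne_zero.mpr (fun h => hτy h.symm))
  have hpiece : ∀ c e : ℝ, c ∈ Icc a b → e ∈ Icc a b →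
      (∀ τ ∈ Ioo (min c e) (max c e), τ ≠ y) →
      ∫ t in c..e, ((k:ℝ)+1) * ((f y - taylorPolyWithin f (Icc a b) (k+1) t y) / (y - t) ^ (k+2))
        = Φ e - Φ c := by
    intro c e hc he hne
    apply intervalIntegral.integral_eq_sub_of_hasDeriv_right (hcont.mono (uIcc_subset_Icc hc he))
      _ (int_t hab hα hα1 hf hH hc he hy)
    intro τ hτ
    have hτab : τ ∈ Ioo a b :=
      ⟨lt_of_le_of_lt (le_min hc.1 he.1) hτ.1, lt_of_lt_of_le hτ.2 (max_le hc.2 he.2)⟩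
    have hτy := hne τ hτ
    have hder := g_hasDeriv a b hab k f hf (Ioo_subset_Icc_self hτab) (Ne.symm hτy)
    have hderAt := hder.hasDerivAt (Icc_mem_nhds hτab.1 hτab.2)
    have heq : Φ =ᶠ[nhds τ] fun t => (f y - taylorPolyWithin f (Icc a b) k t y) / (y - t) ^ (k+1) := by
      filter_upwards [isOpen_compl_singleton.mem_nhds
        (by simpa using hτy : τ ∈ ({y}ᶜ : Set ℝ))] with t ht
      exact hagree t ht
    exact ((hderAt.congr_of_eventuallyEq heq).hasDerivWithinAt)
  have i1 := int_t hab hα hα1 hf hH hx hy hy (M := M)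
  have i2 := int_t hab hα hα1 hf hH hy hu hy (M := M)
  have e1 : ∫ t in x..y, ((k:ℝ)+1) * ((f y - taylorPolyWithin f (Icc a b) (k+1) t y) / (y - t) ^ (k+2))
      = Φ y - Φ x := by
    apply hpiece x y hx hy
    intro τ hτ
    rcases le_total x y with h | h
    · rw [max_eq_right h] at hτ; exact ne_of_lt hτ.2
    · rw [min_eq_right h] at hτ; exact ne_of_gt hτ.1
  have e2 : ∫ t in y..u, ((k:ℝ)+1) * ((f y - taylorPolyWithin f (Icc a b) (k+1) t y) / (y - t) ^ (k+2))
      = Φ u - Φ y := by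
    apply hpiece y u hy hu
    intro τ hτ
    rcases le_total y u with h | h
    · rw [min_eq_left h] at hτ; exact ne_of_gt hτ.1
    · rw [max_eq_left h] at hτ; exact ne_of_lt hτ.2
  rw [← intervalIntegral.integral_add_adjacent_intervals i1 i2, e1, e2,
    ← hagree u (Ne.symm hyu), ← hagree x (Ne.symm hyx)]
  ring
end
section
open MeasureTheory
variable {a b α M : ℝ} {k : ℕ} {f : ℝ → ℝ}

/-- Set-integral bound in the `y` variable, center `t`. -/
theorem gprime_setIntegral_bound_y (hab : a < b) (hα : 0 < α) (hα1 : α < 1)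
    (hf : ContDiffOn ℝ (k + 1) f (Icc a b))
    (hH : ∀ x ∈ Icc a b, ∀ y ∈ Icc a b,
      |iteratedDerivWithin (k + 1) f (Icc a b) x - iteratedDerivWithin (k + 1) f (Icc a b) y|
        ≤ M * |x - y| ^ α)
    {t : ℝ} (ht : t ∈ Icc a b) {E : Set ℝ} (hE : MeasurableSet E) (hEab : E ⊆ Icc a b)
    {r : ℝ} (hr : 0 < r) (hEr : E ⊆ Ioc (t - r) (t + r)) :
    IntegrableOn
      (fun y => ((k:ℝ)+1) * ((f y - taylorPolyWithin f (Icc a b) (k+1) t y) / (y - t) ^ (k+2))) E ∧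
    ∫ y in E, ‖((k:ℝ)+1) * ((f y - taylorPolyWithin f (Icc a b) (k+1) t y) / (y - t) ^ (k+2))‖
      ≤ ((k:ℝ)+1) * M / (k.factorial : ℝ) * (2 * r ^ α / α) := by
  have hdom := rpow_kernel_setIntegral_le hα t r hr hEr
  have hbd : ∀ y ∈ E,
      ‖((k:ℝ)+1) * ((f y - taylorPolyWithin f (Icc a b) (k+1) t y) / (y - t) ^ (k+2))‖
        ≤ ((k:ℝ)+1) * M / (k.factorial : ℝ) * |y - t| ^ (α - 1) := by
    intro y hy
    rw [Real.norm_eq_abs]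
    exact gprime_bound hab hα hα1 hf hH ht (hEab hy)
  have hint : IntegrableOn
      (fun y => ((k:ℝ)+1) * ((f y - taylorPolyWithin f (Icc a b) (k+1) t y) / (y - t) ^ (k+2))) E := by
    apply Integrable.mono' (hdom.1.const_mul (((k:ℝ)+1) * M / (k.factorial : ℝ)))
    · exact aesm_y hab hf (k+1) (k+2) t hE hEab _
    · filter_upwards [ae_restrict_mem hE] with y hy using hbd y hy
  refine ⟨hint, ?_⟩
  have h1 : ∫ y in E, ‖((k:ℝ)+1) * ((f y - taylorPolyWithin f (Icc a b) (k+1) t y) / (y - t) ^ (k+2))‖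
      ≤ ∫ y in E, ((k:ℝ)+1) * M / (k.factorial : ℝ) * |y - t| ^ (α - 1) := by
    apply setIntegral_mono_on hint.norm (hdom.1.const_mul _) hE
    intro y hy
    exact hbd y hy
  refine h1.trans ?_
  rw [MeasureTheory.integral_const_mul]
  have hM := M_nonneg hab hα hH
  have hC : (0:ℝ) ≤ ((k:ℝ)+1) * M / (k.factorial : ℝ) := by positivity
  exact mul_le_mul_of_nonneg_left hdom.2 hC

/-- Set-integral bound in the `t` variable, with `y` fixed. -/
theorem gprime_setIntegral_bound_t (hab : a < b) (hα : 0 < α) (hα1 : α < 1)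
    (hf : ContDiffOn ℝ (k + 1) f (Icc a b))
    (hH : ∀ x ∈ Icc a b, ∀ y ∈ Icc a b,
      |iteratedDerivWithin (k + 1) f (Icc a b) x - iteratedDerivWithin (k + 1) f (Icc a b) y|
        ≤ M * |x - y| ^ α)
    {y : ℝ} (hy : y ∈ Icc a b) {E : Set ℝ} (hE : MeasurableSet E) (hEab : E ⊆ Icc a b)
    {r : ℝ} (hr : 0 < r) (hEr : E ⊆ Ioc (y - r) (y + r)) :
    IntegrableOn
      (fun t => ((k:ℝ)+1) * ((f y - taylorPolyWithin f (Icc a b) (k+1) t y) / (y - t) ^ (k+2))) E ∧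
    ∫ t in E, ‖((k:ℝ)+1) * ((f y - taylorPolyWithin f (Icc a b) (k+1) t y) / (y - t) ^ (k+2))‖
      ≤ ((k:ℝ)+1) * M / (k.factorial : ℝ) * (2 * r ^ α / α) := by
  have hdom := rpow_kernel_setIntegral_le hα y r hr hEr
  have hbd : ∀ t ∈ E,
      ‖((k:ℝ)+1) * ((f y - taylorPolyWithin f (Icc a b) (k+1) t y) / (y - t) ^ (k+2))‖
        ≤ ((k:ℝ)+1) * M / (k.factorial : ℝ) * |t - y| ^ (α - 1) := by
    intro t htE
    rw [Real.norm_eq_abs]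
    refine (gprime_bound hab hα hα1 hf hH (hEab htE) hy).trans ?_
    rw [abs_sub_comm]
  have hint : IntegrableOn
      (fun t => ((k:ℝ)+1) * ((f y - taylorPolyWithin f (Icc a b) (k+1) t y) / (y - t) ^ (k+2))) E := by
    apply Integrable.mono' (hdom.1.const_mul (((k:ℝ)+1) * M / (k.factorial : ℝ)))
    · exact aesm_t hab hf le_rfl (k+2) y hE hEab _
    · filter_upwards [ae_restrict_mem hE] with t htE using hbd t htE
  refine ⟨hint, ?_⟩
  have h1 : ∫ t in E, ‖((k:ℝ)+1) * ((f y - taylorPolyWithin f (Icc a b) (k+1) t y) / (y - t) ^ (k+2))‖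
      ≤ ∫ t in E, ((k:ℝ)+1) * M / (k.factorial : ℝ) * |t - y| ^ (α - 1) := by
    apply setIntegral_mono_on hint.norm (hdom.1.const_mul _) hE
    intro t htE
    exact hbd t htE
  refine h1.trans ?_
  rw [MeasureTheory.integral_const_mul]
  have hM := M_nonneg hab hα hH
  have hC : (0:ℝ) ≤ ((k:ℝ)+1) * M / (k.factorial : ℝ) := by positivity
  exact mul_le_mul_of_nonneg_left hdom.2 hC

theorem Icc_subset_Ioc_center {t r : ℝ} (hab : a < b) (ht : t ∈ Icc a b) (hr : r = 2*(b-a)) :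
    Icc a b ⊆ Ioc (t - r) (t + r) := by
  subst hr
  intro z hz
  constructor
  · nlinarith [ht.2, hz.1]
  · nlinarith [ht.1, hz.2]
end
section
open MeasureTheory
variable {a b α M : ℝ} {k : ℕ} {f : ℝ → ℝ}

theorem g_integrableOn (hab : a < b) (hα : 0 < α)
    (hf : ContDiffOn ℝ (k + 1) f (Icc a b))
    (hH : ∀ x ∈ Icc a b, ∀ y ∈ Icc a b,
      |iteratedDerivWithin (k + 1) f (Icc a b) x - iteratedDerivWithin (k + 1) f (Icc a b) y|
        ≤ M * |x - y| ^ α)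
    {v : ℝ} (hv : v ∈ Icc a b) :
    IntegrableOn (fun y => (f y - taylorPolyWithin f (Icc a b) k v y) / (y - v) ^ (k+1))
      (Ioc a b) := by
  obtain ⟨C₃, hC₃⟩ := isCompact_Icc.exists_bound_of_continuousOn
    (contOn_d (k := k) (f := f) hab hf le_rfl)
  simp only [Real.norm_eq_abs] at hC₃
  apply Integrable.mono' (g := fun _ => M / (k.factorial : ℝ) * (b - a) ^ α + C₃)
    (integrableOn_const measure_Ioc_lt_top.ne)
  · have := aesm_y hab hf k (k+1) v measurableSet_Ioc Ioc_subset_Icc_self 1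
    simpa using this
  · filter_upwards [ae_restrict_mem measurableSet_Ioc] with y hy
    rw [Real.norm_eq_abs]
    exact g_bound hab hα hf hH hC₃ hv (Ioc_subset_Icc_self hy)

theorem key_identity_le (hab : a < b) (hα : 0 < α) (hα1 : α < 1)
    (hf : ContDiffOn ℝ (k + 1) f (Icc a b))
    (hH : ∀ x ∈ Icc a b, ∀ y ∈ Icc a b,
      |iteratedDerivWithin (k + 1) f (Icc a b) x - iteratedDerivWithin (k + 1) f (Icc a b) y|
        ≤ M * |x - y| ^ α)
    {x u : ℝ} (hx : x ∈ Icc a b) (hu : u ∈ Icc a b) (hxu : x ≤ u) :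
    (∫ y in a..b, (f y - taylorPolyWithin f (Icc a b) k u y) / (y - u) ^ (k+1))
      - (∫ y in a..b, (f y - taylorPolyWithin f (Icc a b) k x y) / (y - x) ^ (k+1))
    = ∫ t in x..u,
        (∫ y in a..b,
          ((k:ℝ)+1) * ((f y - taylorPolyWithin f (Icc a b) (k+1) t y) / (y - t) ^ (k+2))) := by
  have hr : (0:ℝ) < 2*(b-a) := by linarith
  -- step 1: difference of integrals
  rw [intervalIntegral.integral_of_le hab.le, intervalIntegral.integral_of_le hab.le,
    ← integral_sub (g_integrableOn hab hα hf hH hu) (g_integrableOn hab hα hf hH hx)]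
  -- step 2: a.e. rewrite via pointwise FTC
  have hae : ∀ᵐ y ∂(volume.restrict (Ioc a b)), y ∉ ({x, u} : Set ℝ) := by
    apply ae_restrict_of_ae
    have hz : volume ({x, u} : Set ℝ) = 0 :=
      Set.Finite.measure_zero (Set.toFinite _) volume
    apply ae_iff.mpr
    apply measure_mono_null _ hz
    intro z hz'
    simpa using not_not.mp hz'
  have step2 : ∫ y in Ioc a b,
      ((f y - taylorPolyWithin f (Icc a b) k u y) / (y - u) ^ (k+1)
        - (f y - taylorPolyWithin f (Icc a b) k x y) / (y - x) ^ (k+1))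
      = ∫ y in Ioc a b, (∫ t in Set.Ioc x u,
          ((k:ℝ)+1) * ((f y - taylorPolyWithin f (Icc a b) (k+1) t y) / (y - t) ^ (k+2))) := by
    apply MeasureTheory.integral_congr_ae
    filter_upwards [ae_restrict_mem measurableSet_Ioc, hae] with y hymem hynot
    have hyx : y ≠ x := fun h => hynot (by simp [h])
    have hyu : y ≠ u := fun h => hynot (by simp [h])
    rw [pointwise_ftc hab hα hα1 hf hH hx hu (Ioc_subset_Icc_self hymem) hyx hyu,
      intervalIntegral.integral_of_le hxu]
  rw [step2]
  -- step 3: Fubini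
  have hprodmeas : AEStronglyMeasurable
      (Function.uncurry fun y t =>
        ((k:ℝ)+1) * ((f y - taylorPolyWithin f (Icc a b) (k+1) t y) / (y - t) ^ (k+2)))
      ((volume.restrict (Ioc a b)).prod (volume.restrict (Set.Ioc x u))) := by
    have h := aesm_prod hab hf le_rfl (k+2) measurableSet_Ioc measurableSet_Ioc
      (Ioc_subset_Icc_self.trans (Icc_subset_Icc hx.1 hu.2)) Ioc_subset_Icc_self ((k:ℝ)+1)
    exact h.prod_swap
  have hprodint : Integrable
      (Function.uncurry fun y t =>
        ((k:ℝ)+1) * ((f y - taylorPolyWithin f (Icc a b) (k+1) t y) / (y - t) ^ (k+2)))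
      ((volume.restrict (Ioc a b)).prod (volume.restrict (Set.Ioc x u))) := by
    rw [integrable_prod_iff hprodmeas]
    constructor
    · filter_upwards [ae_restrict_mem measurableSet_Ioc] with y hymem
      exact (gprime_setIntegral_bound_t hab hα hα1 hf hH (Ioc_subset_Icc_self hymem)
        measurableSet_Ioc (Ioc_subset_Icc_self.trans (Icc_subset_Icc hx.1 hu.2)) hr
        ((Ioc_subset_Icc_self.trans (Icc_subset_Icc hx.1 hu.2)).trans
          (Icc_subset_Ioc_center hab (Ioc_subset_Icc_self hymem) rfl))).1
    · apply Integrable.mono'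
        (g := fun _ => ((k:ℝ)+1) * M / (k.factorial : ℝ) * (2 * (2*(b-a)) ^ α / α))
        (integrableOn_const measure_Ioc_lt_top.ne)
      · exact hprodmeas.norm.integral_prod_right'
      · filter_upwards [ae_restrict_mem measurableSet_Ioc] with y hymem
        rw [Real.norm_eq_abs]
        rw [abs_of_nonneg (integral_nonneg (fun t => norm_nonneg _))]
        exact (gprime_setIntegral_bound_t hab hα hα1 hf hH (Ioc_subset_Icc_self hymem)
          measurableSet_Ioc (Ioc_subset_Icc_self.trans (Icc_subset_Icc hx.1 hu.2)) hr
          ((Ioc_subset_Icc_self.trans (Icc_subset_Icc hx.1 hu.2)).trans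
            (Icc_subset_Ioc_center hab (Ioc_subset_Icc_self hymem) rfl))).2
  have hswap := integral_integral_swap hprodint
  rw [hswap]
  -- step 4: identify inner integrals
  rw [intervalIntegral.integral_of_le hxu]
  apply setIntegral_congr_fun measurableSet_Ioc
  intro t _
  simp only [intervalIntegral.integral_of_le hab.le]
end
section
open MeasureTheory
variable {a b α M : ℝ} {k : ℕ} {f : ℝ → ℝ}

theorem G_aesm (hab : a < b) (hf : ContDiffOn ℝ (k + 1) f (Icc a b)) :
    AEStronglyMeasurable
      (fun t => ∫ y in a..b,
        ((k:ℝ)+1) * ((f y - taylorPolyWithin f (Icc a b) (k+1) t y) / (y - t) ^ (k+2)))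
      (volume.restrict (Icc a b)) := by
  have h := aesm_prod hab hf le_rfl (k+2) measurableSet_Icc measurableSet_Ioc
    (fun z hz => hz) Ioc_subset_Icc_self ((k:ℝ)+1)
  have h2 := h.integral_prod_right'
  apply h2.congr
  filter_upwards with t
  rw [intervalIntegral.integral_of_le hab.le]

theorem G_integrableOn_Ioc (hab : a < b) (hα : 0 < α) (hα1 : α < 1)
    (hf : ContDiffOn ℝ (k + 1) f (Icc a b))
    (hH : ∀ x ∈ Icc a b, ∀ y ∈ Icc a b,
      |iteratedDerivWithin (k + 1) f (Icc a b) x - iteratedDerivWithin (k + 1) f (Icc a b) y|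
        ≤ M * |x - y| ^ α)
    {t : ℝ} (ht : t ∈ Icc a b) :
    IntegrableOn
      (fun y => ((k:ℝ)+1) * ((f y - taylorPolyWithin f (Icc a b) (k+1) t y) / (y - t) ^ (k+2)))
      (Ioc a b) :=
  (gprime_setIntegral_bound_y hab hα hα1 hf hH ht measurableSet_Ioc Ioc_subset_Icc_self
    (by linarith : (0:ℝ) < 2*(b-a))
    (Ioc_subset_Icc_self.trans (Icc_subset_Ioc_center hab ht rfl))).1

theorem G_bound (hab : a < b) (hα : 0 < α) (hα1 : α < 1)
    (hf : ContDiffOn ℝ (k + 1) f (Icc a b))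
    (hH : ∀ x ∈ Icc a b, ∀ y ∈ Icc a b,
      |iteratedDerivWithin (k + 1) f (Icc a b) x - iteratedDerivWithin (k + 1) f (Icc a b) y|
        ≤ M * |x - y| ^ α)
    {t : ℝ} (ht : t ∈ Icc a b) :
    |∫ y in a..b,
        ((k:ℝ)+1) * ((f y - taylorPolyWithin f (Icc a b) (k+1) t y) / (y - t) ^ (k+2))|
      ≤ ((k:ℝ)+1) * M / (k.factorial : ℝ) * (2 * (2*(b-a)) ^ α / α) := by
  rw [intervalIntegral.integral_of_le hab.le, ← Real.norm_eq_abs]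
  refine (MeasureTheory.norm_integral_le_integral_norm _).trans ?_
  exact (gprime_setIntegral_bound_y hab hα hα1 hf hH ht measurableSet_Ioc Ioc_subset_Icc_self
    (by linarith : (0:ℝ) < 2*(b-a))
    (Ioc_subset_Icc_self.trans (Icc_subset_Ioc_center hab ht rfl))).2

theorem G_integrable (hab : a < b) (hα : 0 < α) (hα1 : α < 1)
    (hf : ContDiffOn ℝ (k + 1) f (Icc a b))
    (hH : ∀ x ∈ Icc a b, ∀ y ∈ Icc a b,
      |iteratedDerivWithin (k + 1) f (Icc a b) x - iteratedDerivWithin (k + 1) f (Icc a b) y|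
        ≤ M * |x - y| ^ α) :
    IntegrableOn
      (fun t => ∫ y in a..b,
        ((k:ℝ)+1) * ((f y - taylorPolyWithin f (Icc a b) (k+1) t y) / (y - t) ^ (k+2)))
      (Icc a b) := by
  apply Integrable.mono'
    (g := fun _ => ((k:ℝ)+1) * M / (k.factorial : ℝ) * (2 * (2*(b-a)) ^ α / α))
    (integrableOn_const measure_Icc_lt_top.ne)
  · exact G_aesm hab hf
  · filter_upwards [ae_restrict_mem measurableSet_Icc] with t htmem
    rw [Real.norm_eq_abs]
    exact G_bound hab hα hα1 hf hH htmem
end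
section
open MeasureTheory
variable {a b α M : ℝ} {k : ℕ} {f : ℝ → ℝ}

theorem G_contWithin (hab : a < b) (hα : 0 < α) (hα1 : α < 1)
    (hf : ContDiffOn ℝ (k + 1) f (Icc a b))
    (hH : ∀ x ∈ Icc a b, ∀ y ∈ Icc a b,
      |iteratedDerivWithin (k + 1) f (Icc a b) x - iteratedDerivWithin (k + 1) f (Icc a b) y|
        ≤ M * |x - y| ^ α)
    {x : ℝ} (hx : x ∈ Icc a b) :
    ContinuousWithinAt
      (fun t => ∫ y in a..b,
        ((k:ℝ)+1) * ((f y - taylorPolyWithin f (Icc a b) (k+1) t y) / (y - t) ^ (k+2)))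
      (Icc a b) x := by
  have hM := M_nonneg hab hα hH
  set C₂ := ((k:ℝ)+1) * M / (k.factorial : ℝ) with hC₂
  have hC₂0 : 0 ≤ C₂ := by positivity
  rw [Metric.continuousWithinAt_iff]
  intro ε hε
  set T := min (ε * α / (16 * (C₂ + 1))) 1 with hT
  have hT0 : 0 < T := lt_min (by positivity) one_pos
  set δ := T ^ (1/α) / 2 with hδ
  have hδ0 : 0 < δ := by positivity
  have h2δ : (2*δ) ^ α = T := by
    rw [hδ, show 2 * (T ^ (1/α) / 2) = T ^ (1/α) by ring, ← Real.rpow_mul hT0.le,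
      one_div, inv_mul_cancel₀ hα.ne', Real.rpow_one]
  have hnear : C₂ * (2 * (2*δ) ^ α / α) ≤ ε / 8 := by
    rw [h2δ]
    have hTle : T ≤ ε * α / (16 * (C₂ + 1)) := min_le_left _ _
    calc C₂ * (2 * T / α) ≤ (C₂+1) * (2 * (ε * α / (16 * (C₂ + 1))) / α) := by
          gcongr
          linarith
      _ = ε / 8 := by
          field_simp
          ring
  set E : Set ℝ := Ioc a b ∩ Ioc (x-δ) (x+δ) with hE
  have hEmeas : MeasurableSet E := measurableSet_Ioc.inter measurableSet_Ioc
  have hEIcc : E ⊆ Icc a b := (Set.inter_subset_left).trans Ioc_subset_Icc_self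
  have hFmeas : MeasurableSet (Ioc a b \ E) := measurableSet_Ioc.diff hEmeas
  have hFIcc : (Ioc a b \ E) ⊆ Icc a b := (Set.diff_subset).trans Ioc_subset_Icc_self
  -- near-part estimate
  have hEnear : ∀ t ∈ Icc a b, dist t x < δ →
      |∫ y in E, ((k:ℝ)+1) * ((f y - taylorPolyWithin f (Icc a b) (k+1) t y) / (y - t) ^ (k+2))|
        ≤ ε / 8 := by
    intro t ht htd
    rw [Real.dist_eq] at htd
    have hsub : E ⊆ Ioc (t - 2*δ) (t + 2*δ) := by
      intro y hy
      obtain ⟨-, hy2⟩ := hy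
      rcases abs_lt.mp htd with ⟨h1, h2⟩
      exact ⟨by linarith [hy2.1], by linarith [hy2.2]⟩
    have hbd := gprime_setIntegral_bound_y hab hα hα1 hf hH ht hEmeas hEIcc
      (by linarith : (0:ℝ) < 2*δ) hsub
    rw [← Real.norm_eq_abs]
    refine (MeasureTheory.norm_integral_le_integral_norm _).trans (hbd.2.trans hnear)
  -- far part continuity
  have hfarcont : ContinuousWithinAt
      (fun t => ∫ y in Ioc a b \ E,
        ((k:ℝ)+1) * ((f y - taylorPolyWithin f (Icc a b) (k+1) t y) / (y - t) ^ (k+2)))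
      (Icc a b) x := by
    apply continuousWithinAt_of_dominated (bound := fun _ => C₂ * (δ/2) ^ (α - 1))
    · exact Filter.Eventually.of_forall fun t => aesm_y hab hf (k+1) (k+2) t hFmeas hFIcc _
    · have hev : ∀ᶠ t in nhdsWithin x (Icc a b), dist t x < δ/2 :=
        Filter.Eventually.filter_mono nhdsWithin_le_nhds
          (Metric.eventually_nhds_iff.mpr ⟨δ/2, by positivity, fun {y} hy => hy⟩)
      filter_upwards [hev, self_mem_nhdsWithin] with t htd htI
      filter_upwards [ae_restrict_mem hFmeas] with y hyF
      have hyIoc : y ∈ Ioc a b := hyF.1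
      have hynot : y ∉ Ioc (x-δ) (x+δ) := fun h => hyF.2 ⟨hyIoc, h⟩
      have hyd : δ/2 ≤ |y - t| := by
        rw [Real.dist_eq] at htd
        rcases abs_lt.mp htd with ⟨h1, h2⟩
        rcases not_and_or.mp (fun h => hynot ⟨h.1, h.2⟩) with h | h
        · push_neg at h
          rw [abs_sub_comm, abs_of_pos (by linarith)]
          linarith
        · push_neg at h
          rw [abs_of_pos (by linarith)]
          linarith
      rw [Real.norm_eq_abs]
      refine (gprime_bound hab hα hα1 hf hH htI (Ioc_subset_Icc_self hyIoc)).trans ?_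
      have := Real.rpow_le_rpow_of_nonpos (by positivity : (0:ℝ) < δ/2) hyd (by linarith : α - 1 ≤ 0)
      exact mul_le_mul_of_nonneg_left this hC₂0
    · exact integrableOn_const ((measure_mono Set.diff_subset).trans_lt
        measure_Ioc_lt_top).ne
    · filter_upwards [ae_restrict_mem hFmeas] with y hyF
      have hyIoc : y ∈ Ioc a b := hyF.1
      have hynot : y ∉ Ioc (x-δ) (x+δ) := fun h => hyF.2 ⟨hyIoc, h⟩
      have hyx : y - x ≠ 0 := by
        intro h
        apply hynot
        rw [sub_eq_zero.mp h]
        exact ⟨by linarith, by linarith⟩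
      exact ContinuousWithinAt.mul continuousWithinAt_const
        (ContinuousWithinAt.div
          ((ContinuousOn.sub continuousOn_const (contOn_P hab hf le_rfl y)) x hx)
          (Continuous.continuousWithinAt ((continuous_const.sub continuous_id).pow (k+2)))
          (pow_ne_zero _ hyx))
  -- decomposition
  have hdec : ∀ t ∈ Icc a b,
      (∫ y in a..b, ((k:ℝ)+1) * ((f y - taylorPolyWithin f (Icc a b) (k+1) t y) / (y - t) ^ (k+2)))
      = (∫ y in E, ((k:ℝ)+1) * ((f y - taylorPolyWithin f (Icc a b) (k+1) t y) / (y - t) ^ (k+2)))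
        + ∫ y in Ioc a b \ E,
            ((k:ℝ)+1) * ((f y - taylorPolyWithin f (Icc a b) (k+1) t y) / (y - t) ^ (k+2)) := by
    intro t ht
    have hI := G_integrableOn_Ioc hab hα hα1 hf hH ht
    rw [intervalIntegral.integral_of_le hab.le,
      MeasureTheory.integral_diff hEmeas hI Set.inter_subset_left]
    ring
  -- glue
  obtain ⟨δ'', hδ''0, hδ''⟩ := Metric.continuousWithinAt_iff.mp hfarcont (ε/2) (by linarith)
  refine ⟨min (δ/2) δ'', lt_min (by positivity) hδ''0, ?_⟩
  intro t htI htd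
  have htd1 : dist t x < δ/2 := lt_of_lt_of_le htd (min_le_left _ _)
  have htd2 : dist t x < δ'' := lt_of_lt_of_le htd (min_le_right _ _)
  have hfar := hδ'' htI htd2
  rw [Real.dist_eq] at hfar ⊢
  rw [hdec t htI, hdec x hx]
  have h1 := hEnear t htI (by linarith [htd1] : dist t x < δ)
  have h2 := hEnear x hx (by rw [dist_self]; exact hδ0)
  set A := ∫ y in E, ((k:ℝ)+1) * ((f y - taylorPolyWithin f (Icc a b) (k+1) t y) / (y - t) ^ (k+2))
  set A' := ∫ y in E, ((k:ℝ)+1) * ((f y - taylorPolyWithin f (Icc a b) (k+1) x y) / (y - x) ^ (k+2))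
  set B := ∫ y in Ioc a b \ E, ((k:ℝ)+1) * ((f y - taylorPolyWithin f (Icc a b) (k+1) t y) / (y - t) ^ (k+2))
  set B' := ∫ y in Ioc a b \ E, ((k:ℝ)+1) * ((f y - taylorPolyWithin f (Icc a b) (k+1) x y) / (y - x) ^ (k+2))
  have e : A + B - (A' + B') = (A - A') + (B - B') := by ring
  rw [e]
  calc |A - A' + (B - B')| ≤ |A - A'| + |B - B'| := abs_add_le _ _
    _ ≤ |A| + |A'| + |B - B'| := by linarith [abs_sub A A']
    _ < ε := by linarith
end

open MeasureTheory in
theorem deriv_integral_taylor_remainder (a b α : ℝ) (k : ℕ) (hab : a < b)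
    (hα : 0 < α) (hα1 : α < 1) (f : ℝ → ℝ) (M : ℝ)
    (hf : ContDiffOn ℝ (k + 1) f (Icc a b))
    (hH : ∀ x ∈ Icc a b, ∀ y ∈ Icc a b,
      |iteratedDerivWithin (k + 1) f (Icc a b) x - iteratedDerivWithin (k + 1) f (Icc a b) y|
        ≤ M * |x - y| ^ α) :
    ∀ x ∈ Icc a b,
      HasDerivWithinAt
        (fun u => ∫ y in a..b, (f y - taylorPolyWithin f (Icc a b) k u y) / (y - u) ^ (k + 1))
        ((k + 1) * ∫ y in a..b,
          (f y - taylorPolyWithin f (Icc a b) (k + 1) x y) / (y - x) ^ (k + 2))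
        (Icc a b) x := by
  intro x hx
  set G : ℝ → ℝ := fun t => ∫ y in a..b,
    ((k:ℝ)+1) * ((f y - taylorPolyWithin f (Icc a b) (k+1) t y) / (y - t) ^ (k+2)) with hG
  set F : ℝ → ℝ := fun u => ∫ y in a..b,
    (f y - taylorPolyWithin f (Icc a b) k u y) / (y - u) ^ (k + 1) with hF
  have hGx : G x = ((k:ℝ) + 1) * ∫ y in a..b,
      (f y - taylorPolyWithin f (Icc a b) (k + 1) x y) / (y - x) ^ (k + 2) := by
    rw [hG]
    exact intervalIntegral.integral_const_mul _ _
  have key : ∀ u ∈ Icc a b, F u = F x + ∫ t in x..u, G t := by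
    intro u hu
    rcases le_total x u with h | h
    · have := key_identity_le hab hα hα1 hf hH hx hu h
      rw [hF]
      simp only at this ⊢
      linarith [this]
    · have := key_identity_le hab hα hα1 hf hH hu hx h
      rw [intervalIntegral.integral_symm]
      rw [hF]
      simp only at this ⊢
      linarith [this]
  have hGint : IntervalIntegrable G volume a b := by
    rw [intervalIntegrable_iff, uIoc_of_le hab.le]
    exact (G_integrable hab hα hα1 hf hH).mono_set Ioc_subset_Icc_self
  -- derivative of u ↦ ∫ t in x..u, G t
  have Hder : HasDerivWithinAt (fun u => ∫ t in x..u, G t) (G x) (Icc a b) x := by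
    rw [hasDerivWithinAt_iff_tendsto_slope]
    rw [Metric.tendsto_nhdsWithin_nhds]
    intro ε hε
    obtain ⟨δ, hδ0, hδ⟩ := Metric.continuousWithinAt_iff.mp
      (G_contWithin hab hα hα1 hf hH hx) (ε/2) (by linarith)
    refine ⟨δ, hδ0, ?_⟩
    intro u hu hud
    obtain ⟨huI, hux⟩ := hu
    have hux' : u ≠ x := by simpa using hux
    have hGiu : IntervalIntegrable G volume x u := by
      rw [intervalIntegrable_iff]
      apply (G_integrable hab hα hα1 hf hH).mono_set
      rw [uIoc]
      exact fun t htm => ⟨le_trans (le_min hx.1 huI.1) (le_of_lt htm.1),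
        le_trans htm.2 (max_le hx.2 huI.2)⟩
    have hGcu : IntervalIntegrable (fun _ => G x) volume x u := intervalIntegrable_const
    have hkey : (∫ t in x..u, G t) - (u - x) * G x = ∫ t in x..u, (G t - G x) := by
      rw [intervalIntegral.integral_sub hGiu hGcu, intervalIntegral.integral_const]
      simp [smul_eq_mul]
    have hbound : ∀ t ∈ Ι x u, ‖G t - G x‖ ≤ ε/2 := by
      intro t htm
      have htI : t ∈ Icc a b := by
        rw [uIoc] at htm
        exact ⟨le_trans (le_min hx.1 huI.1) (le_of_lt htm.1),
          le_trans htm.2 (max_le hx.2 huI.2)⟩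
      have htd : dist t x < δ := by
        rw [Real.dist_eq] at hud ⊢
        rw [uIoc] at htm
        rcases le_total x u with h | h
        · rw [min_eq_left h, max_eq_right h] at htm
          rw [abs_of_pos (by linarith [htm.1])]
          rw [abs_of_nonneg (by linarith : (0:ℝ) ≤ u - x)] at hud
          linarith [htm.2]
        · rw [min_eq_right h, max_eq_left h] at htm
          rw [abs_of_nonpos (by linarith [htm.2])]
          rw [abs_of_nonpos (by linarith : u - x ≤ 0)] at hud
          linarith [htm.1]
      have := hδ htI htd
      rw [Real.dist_eq] at this
      rw [Real.norm_eq_abs]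
      linarith
    have hnorm := intervalIntegral.norm_integral_le_of_norm_le_const hbound
    rw [← hkey] at hnorm
    rw [Real.dist_eq, slope_def_field]
    rw [intervalIntegral.integral_same, sub_zero]
    have hux0 : u - x ≠ 0 := sub_ne_zero.mpr hux'
    have habs : |(∫ t in x..u, G t) / (u - x) - G x|
        = |(∫ t in x..u, G t) - (u - x) * G x| / |u - x| := by
      rw [← abs_div]
      congr 1
      field_simp
    rw [habs]
    rw [div_lt_iff₀ (abs_pos.mpr hux0)]
    rw [Real.norm_eq_abs] at hnorm
    calc |(∫ t in x..u, G t) - (u - x) * G x| ≤ ε/2 * |u - x| := hnorm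
      _ < ε * |u - x| := by
          have : (0:ℝ) < |u - x| := abs_pos.mpr hux0
          nlinarith
  have Hder2 : HasDerivWithinAt (fun u => F x + ∫ t in x..u, G t) (G x) (Icc a b) x :=
    Hder.const_add (F x)
  have Hfinal : HasDerivWithinAt F (G x) (Icc a b) x := by
    apply Hder2.congr
    · intro u hu
      exact key u hu
    · exact key x hx
  rw [hGx] at Hfinal
  exact Hfinal
end
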